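/- Let 𝒜 : ℝ^{m×n} → ℝ^p be a linear map with restricted isometry constants R_{2r} and R_{3r}, let X ∈ ℝ^{m×n} have rank r, and set κ_1 = 0.1 and κ_2 = 1. Define ε_α = R_{2r}/((1−R_{2r}) − κ_1(1+R_{2r})), ε_β = κ_2 R_{2r}/(1−R_{2r}) + κ_1 κ_2/(1−R_{2r}), τ_1 = 2(R_{2r}+R_{3r})(1+ε_α) + 2ε_α + (4R_{2r}/σ_min(X))‖X‖_F + ε_β, τ_2 = 2ε_β(1+ε_α)(1+R_{2r}), and γ = τ_1 + τ_2. If R_{3r} ≤ (σ_min(X)/σ_max(X)) · 1/(25√r), then γ < 1. -/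

import Mathlib

open Matrix BigOperators

/-- Frobenius inner product of two real matrices. -/
noncomputable def frobInner {m n : ℕ} (A B : Matrix (Fin m) (Fin n) ℝ) : ℝ :=
  ∑ i, ∑ j, A i j * B i j

/-- Frobenius norm of a real matrix. -/
noncomputable def frobNorm {m n : ℕ} (A : Matrix (Fin m) (Fin n) ℝ) : ℝ :=
  Real.sqrt (∑ i, ∑ j, (A i j) ^ 2)

/-- Euclidean inner product on `ℝ^p`. -/
noncomputable def euclInner {p : ℕ} (x y : Fin p → ℝ) : ℝ := ∑ i, x i * y i

/-- Euclidean norm on `ℝ^p`. -/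
noncomputable def euclNorm {p : ℕ} (x : Fin p → ℝ) : ℝ := Real.sqrt (∑ i, (x i) ^ 2)

/-- `R` is the restricted isometry constant of order `s` of the linear map `A`:
the smallest number `t` such that `(1-t)‖Z‖_F² ≤ ‖A Z‖₂² ≤ (1+t)‖Z‖_F²`
for all matrices `Z` of rank at most `s`. -/
def IsRIC {m n p : ℕ} (A : Matrix (Fin m) (Fin n) ℝ →ₗ[ℝ] (Fin p → ℝ)) (s : ℕ) (R : ℝ) :
    Prop :=
  IsLeast {t : ℝ | ∀ Z : Matrix (Fin m) (Fin n) ℝ, Z.rank ≤ s →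
    (1 - t) * (frobNorm Z) ^ 2 ≤ (euclNorm (A Z)) ^ 2 ∧
      (euclNorm (A Z)) ^ 2 ≤ (1 + t) * (frobNorm Z) ^ 2} R

/-- Orthogonal projection onto the tangent space of the rank-`r` manifold at
`U * Σ * Vᵀ`: `P(Z) = U Uᵀ Z + Z V Vᵀ − U Uᵀ Z V Vᵀ`. -/
noncomputable def tangentProj {m n r : ℕ} (U : Matrix (Fin m) (Fin r) ℝ)
    (V : Matrix (Fin n) (Fin r) ℝ) (Z : Matrix (Fin m) (Fin n) ℝ) :
    Matrix (Fin m) (Fin n) ℝ :=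
  U * Uᵀ * Z + Z * (V * Vᵀ) - U * Uᵀ * Z * (V * Vᵀ)

/-- Spectral (operator) norm of a real matrix. -/
noncomputable def specNorm {m n : ℕ} (A : Matrix (Fin m) (Fin n) ℝ) : ℝ :=
  sSup {c : ℝ | ∃ x : Fin n → ℝ, euclNorm x ≤ 1 ∧ c = euclNorm (A.mulVec x)}


section auxRCG
variable {m n r : ℕ}

lemma frobNorm_sq' (Z : Matrix (Fin m) (Fin n) ℝ) :
    frobNorm Z ^ 2 = ∑ i, ∑ j, (Z i j) ^ 2 := by
  apply Real.sq_sqrt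
  positivity

lemma sum_sq_eq_trace' (Z : Matrix (Fin m) (Fin n) ℝ) :
    ∑ i, ∑ j, (Z i j) ^ 2 = (Zᵀ * Z).trace := by
  simp [Matrix.trace, Matrix.mul_apply, Matrix.diag, sq]
  rw [Finset.sum_comm]

lemma frob_sq_svd' (X : Matrix (Fin m) (Fin n) ℝ)
    (UX : Matrix (Fin m) (Fin r) ℝ) (VX : Matrix (Fin n) (Fin r) ℝ)
    (SX : Matrix (Fin r) (Fin r) ℝ)
    (hUX : UXᵀ * UX = 1) (hVX : VXᵀ * VX = 1)
    (hd : SX.IsDiag) (hXsvd : X = UX * SX * VXᵀ) :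
    frobNorm X ^ 2 = ∑ k, (SX k k) ^ 2 := by
  have hST : SXᵀ = SX := by
    ext i j
    by_cases h : i = j
    · subst h; simp [Matrix.transpose_apply]
    · rw [Matrix.transpose_apply, hd h, hd (Ne.symm h)]
  have h1 : Xᵀ * X = VX * (SX * SX) * VXᵀ := by
    calc Xᵀ * X = VX * (SXᵀ * ((UXᵀ * UX) * (SX * VXᵀ))) := by
          rw [hXsvd]
          simp only [Matrix.transpose_mul, Matrix.transpose_transpose, Matrix.mul_assoc]
      _ = VX * (SX * SX) * VXᵀ := by
          rw [hUX, hST, Matrix.one_mul]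
          simp [Matrix.mul_assoc]
  rw [frobNorm_sq', sum_sq_eq_trace', h1, Matrix.trace_mul_comm,
    ← Matrix.mul_assoc, hVX, Matrix.one_mul]
  simp only [Matrix.trace, Matrix.diag, Matrix.mul_apply]
  congr 1
  ext k
  rw [Finset.sum_eq_single k]
  · ring
  · intro b _ hb; rw [hd (Ne.symm hb)]; ring
  · intro h; exact absurd (Finset.mem_univ k) h

end auxRCG

set_option maxHeartbeats 1000000 in
/-- With `κ₁ = 0.1` and `κ₂ = 1`, if `R₃ᵣ ≤ (σ_min(X)/σ_max(X))·1/(25√r)`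
then `γ = τ₁ + τ₂ < 1`. -/
theorem rcg_ric_condition {m n p r : ℕ}
    (hr : 0 < r)
    (A : Matrix (Fin m) (Fin n) ℝ →ₗ[ℝ] (Fin p → ℝ))
    (R2 R3 : ℝ) (hR2 : IsRIC A (2 * r) R2) (hR3 : IsRIC A (3 * r) R3)
    (X : Matrix (Fin m) (Fin n) ℝ) (hrankX : X.rank = r)
    -- reduced SVD of `X`, providing `σ_min(X) = ⨅ i, SX i i` and `σ_max(X) = ⨆ i, SX i i`
    (UX : Matrix (Fin m) (Fin r) ℝ) (VX : Matrix (Fin n) (Fin r) ℝ)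
    (SX : Matrix (Fin r) (Fin r) ℝ)
    (hUX : UXᵀ * UX = 1) (hVX : VXᵀ * VX = 1)
    (hSX : SX.IsDiag ∧ ∀ i, 0 < SX i i) (hXsvd : X = UX * SX * VXᵀ)
    (κ1 κ2 : ℝ) (hκ1 : κ1 = 0.1) (hκ2 : κ2 = 1)
    (εα εβ τ1 τ2 γ : ℝ)
    (hεα : εα = R2 / ((1 - R2) - κ1 * (1 + R2)))
    (hεβ : εβ = κ2 * R2 / (1 - R2) + κ1 * κ2 / (1 - R2))
    (hτ1 : τ1 = 2 * (R2 + R3) * (1 + εα) + 2 * εα +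
      (4 * R2 / (⨅ i, SX i i)) * frobNorm X + εβ)
    (hτ2 : τ2 = 2 * εβ * (1 + εα) * (1 + R2))
    (hγ : γ = τ1 + τ2)
    (hR3bound : R3 ≤ ((⨅ i, SX i i) / (⨆ i, SX i i)) * (1 / (25 * Real.sqrt r))) :
    γ < 1 := by
  -- setup singular value facts
  have hne : Nonempty (Fin r) := ⟨⟨0, hr⟩⟩
  set smin := ⨅ i, SX i i with hsmin
  set smax := ⨆ i, SX i i with hsmax
  obtain ⟨i0, hi0⟩ := exists_eq_ciInf_of_finite (f := fun i => SX i i)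
  have hsminpos : 0 < smin := by rw [hsmin, ← hi0]; exact hSX.2 i0
  have hles : ∀ i, SX i i ≤ smax :=
    fun i => le_ciSup (f := fun j => SX j j) (Set.Finite.bddAbove (Set.finite_range _)) i
  have hges : ∀ i, smin ≤ SX i i :=
    fun i => ciInf_le (f := fun j => SX j j) (Set.Finite.bddBelow (Set.finite_range _)) i
  have hsmaxpos : 0 < smax := lt_of_lt_of_le (hSX.2 i0) (hles i0)
  have hminmax : smin ≤ smax := le_trans (hges i0) (hles i0)
  -- Frobenius norm bound
  have hfsq : frobNorm X ^ 2 = ∑ k, (SX k k) ^ 2 :=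
    frob_sq_svd' X UX VX SX hUX hVX hSX.1 hXsvd
  have hsum_le : ∑ k, (SX k k) ^ 2 ≤ (r : ℝ) * smax ^ 2 := by
    calc ∑ k, (SX k k) ^ 2 ≤ ∑ _k : Fin r, smax ^ 2 := by
          apply Finset.sum_le_sum
          intro i _
          exact pow_le_pow_left₀ (le_of_lt (hSX.2 i)) (hles i) 2
      _ = (r : ℝ) * smax ^ 2 := by simp [Finset.sum_const, mul_comm]
  have hsqrt_r : (1 : ℝ) ≤ Real.sqrt r := by
    rw [show (1:ℝ) = Real.sqrt 1 from (Real.sqrt_one).symm]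
    exact Real.sqrt_le_sqrt (by exact_mod_cast hr)
  have hsqrt_r_pos : 0 < Real.sqrt r := lt_of_lt_of_le one_pos hsqrt_r
  have hfX_nonneg : 0 ≤ frobNorm X := Real.sqrt_nonneg _
  have hfX_le : frobNorm X ≤ Real.sqrt r * smax := by
    have h1 : frobNorm X ^ 2 ≤ (Real.sqrt r * smax) ^ 2 := by
      rw [hfsq, mul_pow, Real.sq_sqrt (Nat.cast_nonneg r)]
      exact hsum_le
    have h2 : 0 ≤ Real.sqrt r * smax := by positivity
    nlinarith
  have hfX_pos : 0 < frobNorm X := by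
    have : 0 < frobNorm X ^ 2 := by
      rw [hfsq]
      have : (SX i0 i0) ^ 2 ≤ ∑ k, (SX k k) ^ 2 :=
        Finset.single_le_sum (f := fun k => (SX k k)^2)
          (fun i _ => sq_nonneg _) (Finset.mem_univ i0)
      nlinarith [hSX.2 i0]
    nlinarith
  -- R2 nonneg, R2 ≤ R3
  have hXrank2 : X.rank ≤ 2 * r := by rw [hrankX]; omega
  have hmemX := hR2.1 X hXrank2
  have hR2nonneg : 0 ≤ R2 := by
    have h1 := hmemX.1
    have h2 := hmemX.2
    nlinarith [pow_pos hfX_pos 2]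
  have hR2leR3 : R2 ≤ R3 :=
    hR2.2 (fun Z hZ => hR3.1 Z (le_trans hZ (by omega)))
  -- R3 ≤ 1/25
  have hfrac1 : smin / smax ≤ 1 := div_le_one_of_le₀ hminmax (le_of_lt hsmaxpos)
  have hfrac2 : 1 / (25 * Real.sqrt r) ≤ 1 / 25 := by
    apply one_div_le_one_div_of_le (by norm_num)
    nlinarith
  have hR3le : R3 ≤ 1 / 25 := by
    have h25 : 0 < 25 * Real.sqrt r := by positivity
    calc R3 ≤ (smin / smax) * (1 / (25 * Real.sqrt r)) := hR3bound
      _ ≤ 1 * (1 / 25) := by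
          apply mul_le_mul hfrac1 hfrac2 (by positivity)
          norm_num
      _ = 1 / 25 := by norm_num
  have hR2le : R2 ≤ 1 / 25 := le_trans hR2leR3 hR3le
  have hR3nonneg : 0 ≤ R3 := le_trans hR2nonneg hR2leR3
  -- bound on t = 4*R2/smin * frobNorm X
  set t := 4 * R2 / smin * frobNorm X with ht
  have htnonneg : 0 ≤ t := by
    rw [ht]
    positivity
  have hkey : R2 * (25 * Real.sqrt r * smax) ≤ smin := by
    have heq : (smin / smax) * (1 / (25 * Real.sqrt r)) = smin / (25 * Real.sqrt r * smax) := by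
      rw [div_mul_div_comm, mul_one, mul_comm smax]
    have := hR3bound
    rw [heq] at this
    have h3 : R2 ≤ smin / (25 * Real.sqrt r * smax) := le_trans hR2leR3 this
    rwa [le_div_iff₀ (by positivity)] at h3
  have htle : t ≤ 4 / 25 := by
    have h1 : t * smin = 4 * R2 * frobNorm X := by
      rw [ht]; field_simp
    have h2 : 4 * R2 * frobNorm X ≤ 4 * R2 * (Real.sqrt r * smax) := by
      apply mul_le_mul_of_nonneg_left hfX_le (by linarith)
    have h3 : 4 * R2 * (Real.sqrt r * smax) ≤ 4 / 25 * smin := by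
      nlinarith
    have h4 : t * smin ≤ 4 / 25 * smin := by linarith
    exact le_of_mul_le_mul_right (by linarith) hsminpos
  -- bounds on εα, εβ
  rw [hκ1] at hεα hεβ
  rw [hκ2] at hεβ
  have hden1 : (0.856 : ℝ) ≤ (1 - R2) - 0.1 * (1 + R2) := by norm_num; linarith
  have hεα0 : 0 ≤ εα := by
    rw [hεα]
    apply div_nonneg hR2nonneg (by linarith)
  have hεα1 : εα ≤ 0.05 := by
    rw [hεα, div_le_iff₀ (by linarith)]
    nlinarith
  have hden2 : (0.96 : ℝ) ≤ 1 - R2 := by linarith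
  have hεβeq : εβ = (R2 + 0.1) / (1 - R2) := by
    rw [hεβ]
    rw [← add_div, one_mul]
    norm_num
  have hεβ0 : 0 ≤ εβ := by
    rw [hεβeq]
    apply div_nonneg (by linarith) (by linarith)
  have hεβ1 : εβ ≤ 0.15 := by
    rw [hεβeq, div_le_iff₀ (by linarith)]
    nlinarith
  -- final
  rw [hγ, hτ1, hτ2]
  have h1 : 2 * (R2 + R3) * (1 + εα) ≤ 2 * (2 / 25) * (1 + 0.05) := by
    apply mul_le_mul (by linarith) (by linarith) (by linarith) (by norm_num)
  have h2 : 2 * εβ * (1 + εα) * (1 + R2) ≤ 2 * 0.15 * 1.05 * 1.04 := by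
    have ha : 2 * εβ * (1 + εα) ≤ 2 * 0.15 * 1.05 := by
      apply mul_le_mul (by linarith) (by linarith) (by linarith) (by norm_num)
    apply mul_le_mul ha (by linarith) (by linarith) (by norm_num)
  norm_num at h1 h2 ⊢
  linarith
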